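/- Let (Ω,𝒜,μ) be a probability space and χ:Ω→[0,∞) measurable with μ(χ>x)=L(x)/x^α for all x>0, where L is slowly varying and 0<α<1. Let (b_n) be natural numbers tending to infinity with b_n=o(n), put ζ_n := b_n^{2/3}, g_n := F^←(1−(b_n−ζ_n)/n), and d_n := (α/(1-α))·n^{1/α}·b_n^{1-1/α}·ℓ^#((n/b_n)^{1/α}). Then d_n ∼ (α/(1−α))·b_n·g_n as n→∞, i.e. lim_{n→∞} d_n/(b_n·g_n) = α/(1−α). -/

import Mathlib

open MeasureTheory Filter Topology ENNReal

section AuxLemmas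

open Filter Topology

private lemma slowsign_eventually_pos (ls : ℝ → ℝ)
    (hsv : ∀ c : ℝ, 0 < c → Tendsto (fun x => ls (c * x) / ls x) atTop (𝓝 1))
    (hne : ∀ᶠ x in atTop, ls x ≠ 0)
    (hP : ∀ M : ℝ, ∃ p, M ≤ p ∧ 0 < ls p) :
    ∀ᶠ x in atTop, 0 < ls x := by
  by_contra hcon
  have hfreq : ∃ᶠ x in atTop, ls x ≤ 0 := by
    simpa [not_lt] using (Filter.not_eventually.mp hcon)
  have h2 : ∀ᶠ x in atTop, 0 < ls (2 * x) / ls x :=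
    (hsv 2 two_pos).eventually (eventually_gt_nhds zero_lt_one)
  obtain ⟨A₀, hA₀⟩ := Filter.eventually_atTop.mp (hne.and h2)
  set A := max A₀ 1 with hA
  have hA1 : (1 : ℝ) ≤ A := le_max_right _ _
  have hAprop : ∀ x, A ≤ x → ls x ≠ 0 ∧ 0 < ls (2 * x) / ls x := fun x hx =>
    hA₀ x (le_trans (le_max_left _ _) hx)
  obtain ⟨q, hqA, hq⟩ := (hfreq.and_eventually (eventually_ge_atTop A)).exists
  have hqneg : ls q < 0 := lt_of_le_of_ne hqA (hAprop q hq).1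
  obtain ⟨p, hpA, hppos⟩ := hP A
  have hp0 : (0:ℝ) < p := lt_of_lt_of_le one_pos (le_trans hA1 hpA)
  have hq0 : (0:ℝ) < q := lt_of_lt_of_le one_pos (le_trans hA1 hq)
  have key : ∀ k : ℕ, 0 < ls (2 ^ k * p) ∧ ls (2 ^ k * q) < 0 := by
    intro k
    induction k with
    | zero => simpa using ⟨hppos, hqneg⟩
    | succ k ih =>
      have hgep : A ≤ 2 ^ k * p :=
        le_trans hpA (le_mul_of_one_le_left hp0.le (one_le_pow₀ one_le_two))
      have hgeq : A ≤ 2 ^ k * q :=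
        le_trans hq (le_mul_of_one_le_left hq0.le (one_le_pow₀ one_le_two))
      have hrp := (hAprop _ hgep).2
      have hrq := (hAprop _ hgeq).2
      constructor
      · have : 0 < ls (2 * (2 ^ k * p)) := by
          rcases div_pos_iff.mp hrp with ⟨h1, _⟩ | ⟨_, h2⟩
          · exact h1
          · linarith [ih.1]
        rw [show (2:ℝ) ^ (k+1) * p = 2 * (2 ^ k * p) by ring]
        exact this
      · have : ls (2 * (2 ^ k * q)) < 0 := by
          rcases div_pos_iff.mp hrq with ⟨_, h2⟩ | ⟨h1, _⟩
          · linarith [ih.2]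
          · exact h1
        rw [show (2:ℝ) ^ (k+1) * q = 2 * (2 ^ k * q) by ring]
        exact this
  have hc : (0:ℝ) < q / p := div_pos hq0 hp0
  have := (hsv (q / p) hc).eventually (eventually_gt_nhds zero_lt_one)
  obtain ⟨X, hX⟩ := Filter.eventually_atTop.mp this
  obtain ⟨k, hk⟩ := pow_unbounded_of_one_lt (X / p) (one_lt_two (α := ℝ))
  have hXk : X ≤ 2 ^ k * p := by
    rw [div_lt_iff₀ hp0] at hk
    linarith
  have hratio := hX _ hXk
  have harg : q / p * (2 ^ k * p) = 2 ^ k * q := by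
    field_simp
  rw [harg] at hratio
  rcases div_pos_iff.mp hratio with ⟨h1, _⟩ | ⟨_, h2⟩
  · linarith [(key k).2]
  · linarith [(key k).1]

end AuxLemmas
open MeasureTheory Filter Topology ENNReal

noncomputable section

/-- Birkhoff sum `S_n χ = ∑_{k=1}^n χ ∘ T^{k-1}`. -/
def birkhoffSumN {Ω : Type*} (T : Ω → Ω) (χ : Ω → ℝ) (n : ℕ) (ω : Ω) : ℝ :=
  ∑ k ∈ Finset.range n, χ (T^[k] ω)

/-- Trimmed sum `S_n^b χ`: the sum of the `n - b` smallest values among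
`χ(ω), χ(Tω), …, χ(T^{n-1}ω)`. -/
def trimmedSumN {Ω : Type*} (T : Ω → Ω) (χ : Ω → ℝ) (n b : ℕ) (ω : Ω) : ℝ :=
  (((((List.range n).map fun k => χ (T^[k] ω))).mergeSort (fun a b => a ≤ b)).take (n - b)).sum

/-- Truncated sum `T_n^f χ = ∑_{k=1}^n (χ·1_{χ ≤ f}) ∘ T^{k-1}`. -/
def truncSumN {Ω : Type*} (T : Ω → Ω) (χ : Ω → ℝ) (n : ℕ) (f : ℝ) (ω : Ω) : ℝ :=
  ∑ k ∈ Finset.range n, if χ (T^[k] ω) ≤ f then χ (T^[k] ω) else 0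

/-- A function `L` is slowly varying if `L(cx)/L(x) → 1` as `x → ∞`, for every `c > 0`. -/
def SlowlyVarying (L : ℝ → ℝ) : Prop :=
  ∀ c : ℝ, 0 < c → Tendsto (fun x => L (c * x) / L x) atTop (𝓝 1)

/-- `ls` is a de Bruijn conjugate of the slowly varying function `Lt`. -/
def IsDeBruijnConjugate (Lt ls : ℝ → ℝ) : Prop :=
  SlowlyVarying ls ∧
  Tendsto (fun x => Lt x * ls (x * Lt x)) atTop (𝓝 1) ∧
  Tendsto (fun x => ls x * Lt (x * ls x)) atTop (𝓝 1)

/-- The measure of dependence `ψ(ℬ,𝒞)` between two sub-σ-fields. -/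
def psiDep {Ω : Type*} [MeasurableSpace Ω] (μ : Measure Ω)
    (B C : MeasurableSpace Ω) : ℝ≥0∞ :=
  ⨆ (b : Set Ω) (c : Set Ω) (_ : MeasurableSet[B] b) (_ : MeasurableSet[C] c)
    (_ : 0 < μ b) (_ : 0 < μ c),
    ENNReal.ofReal |(μ (b ∩ c)).toReal / ((μ b).toReal * (μ c).toReal) - 1|

/-- The σ-field generated by `X_k = χ ∘ T^{k-1}` for `J ≤ k ≤ L`. -/
def sigmaIcc {Ω : Type*} [MeasurableSpace Ω] (T : Ω → Ω) (χ : Ω → ℝ) (J L : ℕ) :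
    MeasurableSpace Ω :=
  ⨆ k ∈ Set.Icc J L, MeasurableSpace.comap (fun ω => χ (T^[k - 1] ω)) inferInstance

/-- The σ-field generated by `X_k = χ ∘ T^{k-1}` for `k ≥ J`. -/
def sigmaIci {Ω : Type*} [MeasurableSpace Ω] (T : Ω → Ω) (χ : Ω → ℝ) (J : ℕ) :
    MeasurableSpace Ω :=
  ⨆ k ∈ Set.Ici J, MeasurableSpace.comap (fun ω => χ (T^[k - 1] ω)) inferInstance

/-- The `n`-th ψ-mixing coefficient of the sequence `(χ ∘ T^{k-1})_{k ≥ 1}`. -/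
def psiCoeff {Ω : Type*} [MeasurableSpace Ω] (μ : Measure Ω) (T : Ω → Ω) (χ : Ω → ℝ)
    (n : ℕ) : ℝ≥0∞ :=
  ⨆ (k : ℕ) (_ : 1 ≤ k), psiDep μ (sigmaIcc T χ 1 k) (sigmaIci T χ (k + n))

/-- A bounded operator `U` has a spectral gap: `U = λ·P + N` with `P` a one-dimensional
projection, `ρ(N) < |λ|`, and `PN = NP = 0`. -/
def HasSpectralGap {F : Type*} [NormedAddCommGroup F] [NormedSpace ℝ F] [CompleteSpace F]
    (U : F →L[ℝ] F) : Prop :=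
  ∃ (lam : ℝ) (P N : F →L[ℝ] F),
    U = lam • P + N ∧ P.comp P = P ∧
    Module.finrank ℝ (LinearMap.range (P : F →ₗ[ℝ] F)) = 1 ∧
    spectralRadius ℝ N < ENNReal.ofReal |lam| ∧
    P.comp N = 0 ∧ N.comp P = 0

/-- Property ℭ: `μ` is a `T`-invariant mixing probability measure, `ℱ` (realized as a Banach
algebra `F` of measurable functions via the injective algebra homomorphism `ι`) contains the
constants, dominates the sup norm, and the transfer operator restricts to a bounded operator
on `F` with a spectral gap. -/
structure PropertyC {Ω : Type*} [MeasurableSpace Ω] (T : Ω → Ω) (μ : Measure Ω)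
    {F : Type*} [NormedRing F] [NormedAlgebra ℝ F] [CompleteSpace F]
    (ι : F →ₐ[ℝ] Ω → ℝ) : Prop where
  prob : IsProbabilityMeasure μ
  invariant : MeasurePreserving T μ μ
  mixing : ∀ A B : Set Ω, MeasurableSet A → MeasurableSet B →
    Tendsto (fun n => μ (A ∩ T^[n] ⁻¹' B)) atTop (𝓝 (μ A * μ B))
  inj : Function.Injective ι
  measurable_mem : ∀ f : F, Measurable (ι f)
  norm_ge_sup : ∀ (f : F) (ω : Ω), |ι f ω| ≤ ‖f‖
  transfer : ∃ That : F →L[ℝ] F,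
    (∀ (f : F) (g : Ω → ℝ), Measurable g → (∃ C, ∀ ω, |g ω| ≤ C) →
      ∫ ω, ι (That f) ω * g ω ∂μ = ∫ ω, ι f ω * g (T ω) ∂μ) ∧
    HasSpectralGap That

/-- Property 𝔇: Property ℭ together with the norm control on truncations of the
nonnegative observable `χ`. -/
structure PropertyD {Ω : Type*} [MeasurableSpace Ω] (T : Ω → Ω) (μ : Measure Ω)
    {F : Type*} [NormedRing F] [NormedAlgebra ℝ F] [CompleteSpace F]
    (ι : F →ₐ[ℝ] Ω → ℝ) (χ : Ω → ℝ) extends PropertyC T μ ι : Prop where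
  chi_nonneg : ∀ ω, 0 ≤ χ ω
  chi_meas : Measurable χ
  norm_bound : ∃ K₁ > (0 : ℝ), ∀ ℓ : ℝ, 0 ≤ ℓ →
    (∃ f : F, ι f = (fun ω => if χ ω ≤ ℓ then χ ω else 0) ∧ ‖f‖ ≤ K₁ * ℓ) ∧
    (∃ g : F, ι g = (fun ω => if ℓ < χ ω then (1 : ℝ) else 0) ∧ ‖g‖ ≤ K₁)

/-- The distribution function `F(x) = μ(χ ≤ x)`. -/
def distF {Ω : Type*} [MeasurableSpace Ω] (μ : Measure Ω) (χ : Ω → ℝ) (x : ℝ) : ℝ :=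
  (μ {ω | χ ω ≤ x}).toReal

/-- Generalized inverse `F^←(y) = inf {x | F(x) ≥ y}`. -/
def genInv (F : ℝ → ℝ) (y : ℝ) : ℝ := sInf {x : ℝ | y ≤ F x}

/-- `g_n = F^←(1 - (b_n - ζ_n)/n)` where `ζ_n = b_n^{2/3}`. -/
def gSeq {Ω : Type*} [MeasurableSpace Ω] (μ : Measure Ω) (χ : Ω → ℝ) (b : ℕ → ℕ)
    (n : ℕ) : ℝ :=
  genInv (distF μ χ) (1 - ((b n : ℝ) - (b n : ℝ) ^ ((2 : ℝ) / 3)) / n)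

/-- The norming sequence `d_n = (α/(1-α))·n^{1/α}·b_n^{1-1/α}·ℓ^#((n/b_n)^{1/α})`. -/
def dSeq (α : ℝ) (ls : ℝ → ℝ) (b : ℕ → ℕ) (n : ℕ) : ℝ :=
  α / (1 - α) * (n : ℝ) ^ (1 / α) * (b n : ℝ) ^ (1 - 1 / α) *
    ls (((n : ℝ) / (b n : ℝ)) ^ (1 / α))

end

set_option maxHeartbeats 1600000 in
theorem dn_asymptotic_bn_gn
    {Ω : Type*} [MeasurableSpace Ω] (μ : Measure Ω) [IsProbabilityMeasure μ]
    (χ : Ω → ℝ) (hχm : Measurable χ) (hχ0 : ∀ ω, 0 ≤ χ ω)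
    (L : ℝ → ℝ) (hL : SlowlyVarying L) (hLpos : ∀ x : ℝ, 0 < x → 0 < L x)
    {α : ℝ} (hα0 : 0 < α) (hα1 : α < 1)
    (htail : ∀ x : ℝ, 0 < x → (μ {ω | x < χ ω}).toReal = L x / x ^ α)
    (b : ℕ → ℕ) (hb : Tendsto b atTop atTop)
    (hbo : Tendsto (fun n => (b n : ℝ) / (n : ℝ)) atTop (𝓝 0))
    (ls : ℝ → ℝ) (hls : IsDeBruijnConjugate (fun x => L x ^ (-(1 / α))) ls)
    :
    Tendsto (fun n => dSeq α ls b n / ((b n : ℝ) * gSeq μ χ b n))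
      atTop (𝓝 (α / (1 - α))) := by
  classical
  obtain ⟨hsv, hrel1, hrel2⟩ := hls
  have hα0' : α ≠ 0 := ne_of_gt hα0
  -- the tail function
  set Tl : ℝ → ℝ := fun x => (μ {ω | x < χ ω}).toReal with hTldef
  have hanti : Antitone Tl := by
    intro x y hxy
    exact ENNReal.toReal_mono (measure_ne_top μ _)
      (measure_mono fun ω hω => lt_of_le_of_lt hxy hω)
  have hTpos : ∀ x : ℝ, 0 < x → 0 < Tl x := by
    intro x hx
    rw [show Tl x = L x / x ^ α from htail x hx]
    exact div_pos (hLpos x hx) (Real.rpow_pos_of_pos hx α)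
  have hmeas : ∀ x : ℝ, MeasurableSet {ω | x < χ ω} := by
    intro x
    exact hχm measurableSet_Ioi
  have hT0 : Tendsto Tl atTop (𝓝 0) := by
    have hseq : Tendsto (fun n : ℕ => μ {ω | (n:ℝ) < χ ω}) atTop (𝓝 0) := by
      have hiInter : (⋂ n : ℕ, {ω | (n:ℝ) < χ ω}) = ∅ := by
        ext ω
        simp only [Set.mem_iInter, Set.mem_setOf_eq, Set.mem_empty_iff_false, iff_false,
          not_forall, not_lt]
        obtain ⟨n, hn⟩ := exists_nat_ge (χ ω)
        exact ⟨n, hn⟩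
      have := tendsto_measure_iInter_atTop (μ := μ)
        (s := fun n : ℕ => {ω | (n:ℝ) < χ ω})
        (fun n => (hmeas _).nullMeasurableSet)
        (by intro i j hij ω hω; simp only [Set.mem_setOf_eq] at *; exact lt_of_le_of_lt (by exact_mod_cast hij : (i:ℝ) ≤ (j:ℝ)) hω)
        ⟨0, measure_ne_top μ _⟩
      rw [hiInter] at this
      simpa [Function.comp_def] using this
    have hnat : Tendsto (fun n : ℕ => Tl (n:ℝ)) atTop (𝓝 0) := by
      have := (ENNReal.tendsto_toReal (by simp : (0:ℝ≥0∞) ≠ ⊤)).comp hseq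
      simpa [Function.comp_def, hTldef] using this
    rw [Metric.tendsto_atTop]
    intro ε hε
    obtain ⟨N, hN⟩ := (Metric.tendsto_atTop.mp hnat) ε hε
    refine ⟨(N:ℝ), fun x hx => ?_⟩
    have h1 : Tl x ≤ Tl (N:ℝ) := hanti hx
    have h2 : 0 ≤ Tl x := ENNReal.toReal_nonneg
    have h3 := hN N le_rfl
    rw [Real.dist_eq] at h3 ⊢
    rw [abs_lt] at h3 ⊢
    constructor <;> [linarith; linarith [h3.2]]
  -- distribution function identity
  have hFc : ∀ x : ℝ, distF μ χ x = 1 - Tl x := by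
    intro x
    have hset : {ω | χ ω ≤ x} = {ω | x < χ ω}ᶜ := by
      ext ω; simp [not_lt]
    rw [distF, hset, measure_compl (hmeas x) (measure_ne_top μ _), measure_univ,
      ENNReal.toReal_sub_of_le prob_le_one (by simp), ENNReal.toReal_one]
  -- auxiliary sequences
  set t : ℕ → ℝ := fun n => ((b n : ℝ) - (b n : ℝ) ^ ((2 : ℝ) / 3)) / (n : ℝ) with htdef
  have hgeq : ∀ n, gSeq μ χ b n = sInf {x : ℝ | Tl x ≤ t n} := by
    intro n
    rw [gSeq, genInv]
    congr 1
    ext x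
    simp only [Set.mem_setOf_eq, hFc x, htdef]
    constructor <;> intro h <;> linarith
  set u : ℕ → ℝ := fun n => ((n : ℝ) / (b n : ℝ)) ^ ((1:ℝ) / α) with hudef
  set w : ℕ → ℝ := fun n => u n * ls (u n) with hwdef
  have hbR : Tendsto (fun n => (b n : ℝ)) atTop atTop :=
    tendsto_natCast_atTop_atTop.comp hb
  have hbpos : ∀ᶠ n in atTop, 0 < (b n : ℝ) := hbR.eventually_gt_atTop 0
  have hnb : Tendsto (fun n : ℕ => (n : ℝ) / (b n : ℝ)) atTop atTop := by
    have hev : ∀ᶠ n : ℕ in atTop, (b n : ℝ) / (n : ℝ) ∈ Set.Ioi (0:ℝ) := by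
      filter_upwards [hbpos, eventually_gt_atTop 0] with n h1 h2
      exact div_pos h1 (by exact_mod_cast h2)
    have h0 : Tendsto (fun n => (b n : ℝ) / (n : ℝ)) atTop (𝓝[>] 0) :=
      tendsto_nhdsWithin_of_tendsto_nhds_of_eventually_within _ hbo hev
    have := h0.inv_tendsto_nhdsGT_zero
    refine this.congr fun n => ?_
    simp [inv_div]
  have huT : Tendsto u atTop atTop := by
    have := (tendsto_rpow_atTop (by positivity : (0:ℝ) < 1/α)).comp hnb
    exact this
  -- eventual positivity of ls
  have hne : ∀ᶠ x in atTop, ls x ≠ 0 := by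
    have := hrel2.eventually (eventually_gt_nhds (by norm_num : (0:ℝ) < 1))
    refine this.mono fun x hx h0 => ?_
    rw [h0] at hx
    simp at hx
  have hVx : ∀ x : ℝ, 0 < x → x * L x ^ (-(1/α)) = (Tl x) ^ (-((1:ℝ)/α)) := by
    intro x hx
    rw [show Tl x = L x / x ^ α from htail x hx,
      Real.div_rpow (hLpos x hx).le (Real.rpow_nonneg hx.le α),
      ← Real.rpow_mul hx.le, show α * -((1:ℝ)/α) = -1 by field_simp,
      Real.rpow_neg_one]
    field_simp
  have hP : ∀ M : ℝ, ∃ p, M ≤ p ∧ 0 < ls p := by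
    intro M
    set M' : ℝ := max M 1 with hM'def
    have hM'pos : (0:ℝ) < M' := lt_of_lt_of_le one_pos (le_max_right _ _)
    set δ : ℝ := (1 / M') ^ α with hδdef
    have hδpos : 0 < δ := Real.rpow_pos_of_pos (by positivity) α
    have hev : ∀ᶠ x : ℝ in atTop,
        (0 < L x ^ (-(1/α)) * ls (x * L x ^ (-(1/α)))) ∧ 1 ≤ x ∧ Tl x < δ := by
      refine ((hrel1.eventually (eventually_gt_nhds (by norm_num : (0:ℝ) < 1))).and
        ((eventually_ge_atTop 1).and (hT0.eventually (eventually_lt_nhds hδpos)))).mono ?_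
      exact fun x hx => ⟨hx.1, hx.2.1, hx.2.2⟩
    obtain ⟨x, hx1, hx2, hx3⟩ := hev.exists
    have hxpos : (0:ℝ) < x := lt_of_lt_of_le one_pos hx2
    have hLtpos : 0 < L x ^ (-(1/α)) := Real.rpow_pos_of_pos (hLpos x hxpos) _
    refine ⟨x * L x ^ (-(1/α)), ?_, ?_⟩
    · -- M ≤ x * Lt x = (Tl x)^(-(1/α)) ≥ M'
      rw [hVx x hxpos]
      have hT : 0 < Tl x := hTpos x hxpos
      have h1 : Tl x ^ ((1:ℝ)/α) ≤ δ ^ ((1:ℝ)/α) :=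
        Real.rpow_le_rpow hT.le hx3.le (by positivity)
      have h2 : δ ^ ((1:ℝ)/α) = 1 / M' := by
        rw [hδdef, ← Real.rpow_mul (by positivity), show α * ((1:ℝ)/α) = 1 by field_simp,
          Real.rpow_one]
      have h3 : 0 < Tl x ^ ((1:ℝ)/α) := Real.rpow_pos_of_pos hT _
      have h4 : (δ ^ ((1:ℝ)/α))⁻¹ ≤ (Tl x ^ ((1:ℝ)/α))⁻¹ := inv_anti₀ h3 h1
      rw [Real.rpow_neg hT.le]
      calc M ≤ M' := le_max_left _ _
        _ = (δ ^ ((1:ℝ)/α))⁻¹ := by rw [h2]; simp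
        _ ≤ _ := h4
    · -- 0 < ls (x * Lt x)
      rcases mul_pos_iff.mp hx1 with ⟨_, h⟩ | ⟨h, _⟩
      · exact h
      · linarith
  have lsev : ∀ᶠ x in atTop, 0 < ls x := slowsign_eventually_pos ls hsv hne hP
  have hlsu : ∀ᶠ n in atTop, 0 < ls (u n) := huT.eventually lsev
  have hupos : ∀ᶠ n in atTop, 0 < u n := huT.eventually_gt_atTop 0
  have hwpos : ∀ᶠ n in atTop, 0 < w n := by
    filter_upwards [hlsu, hupos] with n h1 h2
    exact mul_pos h2 h1
  -- key limit: L(w n) * (ls (u n))^(-α) → 1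
  have hkey : Tendsto (fun n => L (w n) * (ls (u n)) ^ (-α)) atTop (𝓝 1) := by
    have h1 : Tendsto (fun n => (ls (u n) * (L (u n * ls (u n))) ^ (-(1/α))) ^ (-α))
        atTop (𝓝 1) := by
      have h0 := (hrel2.comp huT).rpow_const (p := -α) (Or.inl one_ne_zero)
      simpa [Function.comp] using h0
    refine h1.congr' ?_
    filter_upwards [hupos, hlsu] with n hun hlsn
    have hwn : 0 < w n := mul_pos hun hlsn
    have hLw : 0 < L (w n) := hLpos _ hwn
    rw [show u n * ls (u n) = w n from rfl]
    rw [Real.mul_rpow hlsn.le (Real.rpow_nonneg hLw.le _),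
      ← Real.rpow_mul hLw.le, show -(1/α) * -α = 1 by field_simp, Real.rpow_one]
    ring
  -- tail of w in terms of u
  have hTw : Tendsto (fun n => Tl (w n) * (u n) ^ α) atTop (𝓝 1) := by
    refine hkey.congr' ?_
    filter_upwards [hupos, hlsu] with n hun hlsn
    have hwn : 0 < w n := mul_pos hun hlsn
    rw [show Tl (w n) = L (w n) / (w n) ^ α from htail _ hwn,
      show (w n) ^ α = (u n) ^ α * (ls (u n)) ^ α from Real.mul_rpow hun.le hlsn.le,
      Real.rpow_neg hlsn.le]
    have hu0 : (u n) ^ α ≠ 0 := (Real.rpow_pos_of_pos hun α).ne'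
    have hls0 : (ls (u n)) ^ α ≠ 0 := (Real.rpow_pos_of_pos hlsn α).ne'
    field_simp
  have huα : Tendsto (fun n => (u n) ^ α) atTop atTop :=
    (tendsto_rpow_atTop hα0).comp huT
  have huαinv : Tendsto (fun n => ((u n) ^ α)⁻¹) atTop (𝓝 0) := huα.inv_tendsto_atTop
  have hwT : Tendsto w atTop atTop := by
    have hTw0 : Tendsto (fun n => Tl (w n)) atTop (𝓝 0) := by
      have h2 := hTw.mul huαinv
      rw [mul_zero] at h2
      refine h2.congr' ?_
      filter_upwards [hupos] with n hun
      have h3 : (u n) ^ α ≠ 0 := (Real.rpow_pos_of_pos hun α).ne'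
      field_simp
    rw [tendsto_atTop]
    intro M
    have hM : 0 < Tl (max M 1) := hTpos _ (lt_of_lt_of_le one_pos (le_max_right _ _))
    filter_upwards [hTw0.eventually (eventually_lt_nhds hM)] with n hn
    by_contra hlt
    push_neg at hlt
    have : Tl (max M 1) ≤ Tl (w n) := hanti (le_trans hlt.le (le_max_left M 1))
    linarith
  -- t n * u n ^ α → 1
  have htu : Tendsto (fun n => t n * (u n) ^ α) atTop (𝓝 1) := by
    have hb13 : Tendsto (fun n => (b n : ℝ) ^ (-((1:ℝ)/3))) atTop (𝓝 0) :=
      (tendsto_rpow_neg_atTop (by norm_num : (0:ℝ) < 1/3)).comp hbR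
    have hlim : Tendsto (fun n => 1 - (b n : ℝ) ^ (-((1:ℝ)/3))) atTop (𝓝 1) := by
      have := (tendsto_const_nhds (x := (1:ℝ)) (f := atTop (α := ℕ))).sub hb13
      simpa using this
    refine hlim.congr' ?_
    filter_upwards [hbpos, eventually_gt_atTop 0] with n hbn hn0
    have hn0' : (0:ℝ) < (n:ℝ) := by exact_mod_cast hn0
    have huu : (u n) ^ α = (n : ℝ) / (b n : ℝ) := by
      rw [hudef]
      rw [← Real.rpow_mul (by positivity), show (1:ℝ)/α * α = 1 by field_simp,
        Real.rpow_one]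
    have hbb : (b n : ℝ) ^ ((2:ℝ)/3) / (b n : ℝ) = (b n : ℝ) ^ (-((1:ℝ)/3)) := by
      nth_rewrite 2 [show (b n : ℝ) = (b n : ℝ) ^ (1:ℝ) from (Real.rpow_one _).symm]
      rw [← Real.rpow_sub hbn]
      norm_num
    have hb' : (b n:ℝ) ≠ 0 := hbn.ne'
    have hn' : (n:ℝ) ≠ 0 := hn0'.ne'
    rw [huu, ← hbb]
    simp only [htdef]
    field_simp
  -- t n → 0
  have ht0 : Tendsto t atTop (𝓝 0) := by
    have h2 := htu.mul huαinv
    rw [mul_zero] at h2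
    refine h2.congr' ?_
    filter_upwards [hupos] with n hun
    have h3 : (u n) ^ α ≠ 0 := (Real.rpow_pos_of_pos hun α).ne'
    field_simp
  -- the c-limits
  have Hc : ∀ c : ℝ, 0 < c →
      Tendsto (fun n => Tl (c * w n) * (u n) ^ α) atTop (𝓝 (c ^ (-α))) := by
    intro c hc
    have hLr : Tendsto (fun n => L (c * w n) / L (w n)) atTop (𝓝 1) :=
      (hL c hc).comp hwT
    have hmain : Tendsto
        (fun n => (L (c * w n) / L (w n)) * c ^ (-α) * (L (w n) * (ls (u n)) ^ (-α)))
        atTop (𝓝 (1 * c ^ (-α) * 1)) :=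
      (hLr.mul tendsto_const_nhds).mul hkey
    rw [one_mul, mul_one] at hmain
    refine hmain.congr' ?_
    filter_upwards [hupos, hlsu] with n hun hlsn
    have hwn : 0 < w n := mul_pos hun hlsn
    have hLw : 0 < L (w n) := hLpos _ hwn
    rw [show Tl (c * w n) = L (c * w n) / (c * w n) ^ α from htail _ (mul_pos hc hwn),
      Real.mul_rpow hc.le hwn.le,
      show (w n) ^ α = (u n) ^ α * (ls (u n)) ^ α from Real.mul_rpow hun.le hlsn.le,
      Real.rpow_neg hc.le, Real.rpow_neg hlsn.le]
    have h1 : c ^ α ≠ 0 := (Real.rpow_pos_of_pos hc α).ne'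
    have h2 : (u n) ^ α ≠ 0 := (Real.rpow_pos_of_pos hun α).ne'
    have h3 : (ls (u n)) ^ α ≠ 0 := (Real.rpow_pos_of_pos hlsn α).ne'
    field_simp
  -- lower bound structure for the sets S n
  have hS1 : ∀ᶠ n in atTop, ∀ x ∈ {x : ℝ | Tl x ≤ t n}, 1 < x := by
    have hT1 : 0 < Tl 1 := hTpos 1 one_pos
    filter_upwards [ht0.eventually (eventually_lt_nhds hT1)] with n hn x hx
    by_contra hle
    push_neg at hle
    have h2 : Tl 1 ≤ Tl x := hanti hle
    have hx' : Tl x ≤ t n := hx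
    linarith
  -- membership of 2 * w n (gives nonemptiness)
  have hmem : ∀ c : ℝ, 1 < c → ∀ᶠ n in atTop, c * w n ∈ {x : ℝ | Tl x ≤ t n} := by
    intro c hc
    have hclt : c ^ (-α) < 1 :=
      Real.rpow_lt_one_of_one_lt_of_neg hc (neg_lt_zero.mpr hα0)
    have hev := (Hc c (lt_trans one_pos hc)).eventually_lt htu hclt
    filter_upwards [hev, hupos] with n hn hun
    have h2 : (0:ℝ) < (u n) ^ α := Real.rpow_pos_of_pos hun α
    have := (mul_lt_mul_iff_left₀ h2).mp hn
    exact le_of_lt this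
  have hmem2 : ∀ᶠ n in atTop, 2 * w n ∈ {x : ℝ | Tl x ≤ t n} := hmem 2 one_lt_two
  -- upper bound on g
  have hup : ∀ c : ℝ, 1 < c → ∀ᶠ n in atTop, gSeq μ χ b n ≤ c * w n := by
    intro c hc
    filter_upwards [hmem c hc, hS1] with n h1 h2
    rw [hgeq n]
    exact csInf_le ⟨1, fun x hx => (h2 x hx).le⟩ h1
  -- lower bound on g
  have hlow : ∀ c : ℝ, 0 < c → c < 1 → ∀ᶠ n in atTop, c * w n ≤ gSeq μ χ b n := by
    intro c hc0 hc1
    have hcgt : 1 < c ^ (-α) := by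
      rw [Real.one_lt_rpow_iff_of_pos hc0]
      exact Or.inr ⟨hc1, neg_lt_zero.mpr hα0⟩
    have hev := htu.eventually_lt (Hc c hc0) hcgt
    filter_upwards [hev, hupos, hmem2] with n hn hun hne2
    have h2 : (0:ℝ) < (u n) ^ α := Real.rpow_pos_of_pos hun α
    have hlt : t n < Tl (c * w n) := (mul_lt_mul_iff_left₀ h2).mp hn
    rw [hgeq n]
    refine le_csInf ⟨_, hne2⟩ fun x hx => ?_
    by_contra hxc
    push_neg at hxc
    have h3 : Tl (c * w n) ≤ Tl x := hanti hxc.le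
    have hx' : Tl x ≤ t n := hx
    linarith
  have hg1 : ∀ᶠ n in atTop, 1 ≤ gSeq μ χ b n := by
    filter_upwards [hS1, hmem2] with n h1 h2
    rw [hgeq n]
    exact le_csInf ⟨_, h2⟩ fun x hx => (h1 x hx).le
  -- g / w → 1
  have hgw : Tendsto (fun n => gSeq μ χ b n / w n) atTop (𝓝 1) := by
    rw [tendsto_order]
    constructor
    · intro a ha
      rcases le_or_gt a 0 with h0 | h0
      · filter_upwards [hg1, hwpos] with n h1 h2
        have : 0 < gSeq μ χ b n / w n := div_pos (lt_of_lt_of_le one_pos h1) h2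
        linarith
      · have hc1 : (1+a)/2 < 1 := by linarith
        have hc0 : 0 < (1+a)/2 := by linarith
        filter_upwards [hlow _ hc0 hc1, hwpos] with n h1 h2
        have hle : (1+a)/2 ≤ gSeq μ χ b n / w n := (le_div_iff₀ h2).mpr h1
        linarith
    · intro a ha
      have hc1 : 1 < (1+a)/2 := by linarith
      filter_upwards [hup _ hc1, hwpos] with n h1 h2
      have hle : gSeq μ χ b n / w n ≤ (1+a)/2 := (div_le_iff₀ h2).mpr h1
      linarith
  -- conclude
  have hwg : Tendsto (fun n => w n / gSeq μ χ b n) atTop (𝓝 1) := by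
    have h1 := hgw.inv₀ one_ne_zero
    rw [inv_one] at h1
    exact h1.congr fun n => by rw [inv_div]
  have hfinal := hwg.const_mul (α/(1-α))
  rw [mul_one] at hfinal
  refine hfinal.congr' ?_
  filter_upwards [hg1, hupos, hlsu, hbpos, eventually_gt_atTop 0] with n h1 hun hlsn hbn hn0
  have hgpos : (0:ℝ) < gSeq μ χ b n := lt_of_lt_of_le one_pos h1
  have hn0' : (0:ℝ) < (n:ℝ) := by exact_mod_cast hn0
  have hb1α : (0:ℝ) < (b n : ℝ) ^ ((1:ℝ)/α) := Real.rpow_pos_of_pos hbn _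
  have hud : u n = (n:ℝ) ^ ((1:ℝ)/α) / (b n : ℝ) ^ ((1:ℝ)/α) := by
    rw [hudef]
    exact Real.div_rpow hn0'.le (Nat.cast_nonneg _) _
  have hbd : (b n : ℝ) ^ (1 - (1:ℝ)/α) = (b n : ℝ) / (b n : ℝ) ^ ((1:ℝ)/α) := by
    rw [Real.rpow_sub hbn, Real.rpow_one]
  have hb' : (b n : ℝ) ≠ 0 := hbn.ne'
  have hdseq : dSeq α ls b n = α/(1-α) * ((b n : ℝ) * w n) := by
    rw [dSeq, hbd, hwdef]
    simp only
    rw [show ls (((n:ℝ)/(b n : ℝ)) ^ ((1:ℝ)/α)) = ls (u n) from rfl, hud]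
    ring
  rw [hdseq, mul_div_assoc (α/(1-α)) ((b n:ℝ) * w n) ((b n:ℝ) * gSeq μ χ b n),
    mul_div_mul_left _ _ hb']
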